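/- Let x(u,v) and y(u,v) be the real and imaginary parts of a Weierstrass minimal curve Ψ generated by holomorphic f, g. Then by the Cauchy–Riemann equations x_u = y_v and x_v = −y_u, and hence for every real t the associated surface assoc_t(u,v) = x(u,v)cos t + y(u,v)sin t has the same first fundamental form coefficients as x: E_t = E₀, F_t = F₀, G_t = G₀. -/

import Mathlib

open Complex

lemma aux_hd_u (h : ℂ → ℂ) (d : ℂ) (u v : ℝ) (H : HasDerivAt h d (↑u + ↑v * I)) :
    HasDerivAt (fun s : ℝ => h (↑s + ↑v * I)) d u := by
  have h1 : HasDerivAt (fun w : ℂ => h (w + ↑v * I)) d ↑u := by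
    simpa [Function.comp_def] using H.comp (↑u : ℂ) ((hasDerivAt_id (↑u : ℂ)).add_const (↑v * I))
  exact h1.comp_ofReal

lemma aux_hd_v (h : ℂ → ℂ) (d : ℂ) (u v : ℝ) (H : HasDerivAt h d (↑u + ↑v * I)) :
    HasDerivAt (fun s : ℝ => h (↑u + ↑s * I)) (d * I) v := by
  have h1 : HasDerivAt (fun w : ℂ => h (↑u + w * I)) (d * I) ↑v := by
    simpa [Function.comp_def] using H.comp (↑v : ℂ) (((hasDerivAt_id (↑v : ℂ)).mul_const I).const_add ↑u)
  exact h1.comp_ofReal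

lemma aux_re (F : ℝ → ℂ) (d : ℂ) (p : ℝ) (H : HasDerivAt F d p) :
    HasDerivAt (fun s => (F s).re) d.re p := by
  simpa [Function.comp_def] using (Complex.reCLM.hasFDerivAt.comp_hasDerivAt p H)

lemma aux_im (F : ℝ → ℂ) (d : ℂ) (p : ℝ) (H : HasDerivAt F d p) :
    HasDerivAt (fun s => (F s).im) d.im p := by
  simpa [Function.comp_def] using (Complex.imCLM.hasFDerivAt.comp_hasDerivAt p H)

lemma aux_master (h : ℂ → ℂ) (d : ℂ) (u v : ℝ) (H : HasDerivAt h d (↑u + ↑v * I)) :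
    deriv (fun s : ℝ => (h (↑s + ↑v * I)).re) u = d.re ∧
    deriv (fun s : ℝ => (h (↑s + ↑v * I)).im) u = d.im ∧
    deriv (fun s : ℝ => (h (↑u + ↑s * I)).re) v = -d.im ∧
    deriv (fun s : ℝ => (h (↑u + ↑s * I)).im) v = d.re ∧
    (∀ c s : ℝ,
      deriv (fun w : ℝ => (h (↑w + ↑v * I)).re * c + (h (↑w + ↑v * I)).im * s) u
        = d.re * c + d.im * s) ∧
    (∀ c s : ℝ,
      deriv (fun w : ℝ => (h (↑u + ↑w * I)).re * c + (h (↑u + ↑w * I)).im * s) v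
        = -d.im * c + d.re * s) := by
  have Hu := aux_hd_u h d u v H
  have Hv := aux_hd_v h d u v H
  have hre : (d * I).re = -d.im := by simp
  have him : (d * I).im = d.re := by simp
  refine ⟨(aux_re _ _ _ Hu).deriv, (aux_im _ _ _ Hu).deriv,
    by rw [(aux_re _ _ _ Hv).deriv, hre],
    by rw [(aux_im _ _ _ Hv).deriv, him], ?_, ?_⟩
  · intro c s
    exact (((aux_re _ _ _ Hu).mul_const c).add ((aux_im _ _ _ Hu).mul_const s)).deriv
  · intro c s
    have := (((aux_re _ _ _ Hv).mul_const c).add ((aux_im _ _ _ Hv).mul_const s)).deriv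
    rw [← hre, ← him]; exact this


set_option maxHeartbeats 1000000 in
/-- If `x` and `y` are the real and imaginary parts of a Weierstrass
minimal curve `Ψ = (Ψ₁, Ψ₂, Ψ₃)` generated by holomorphic `f, g`, then the
Cauchy–Riemann equations give `x_u = y_v`, `x_v = −y_u`, and every member
`assoc_t = x cos t + y sin t` of the associated family has the same first
fundamental form coefficients as `x`. -/
theorem associated_family_same_first_fundamental_form
    (f g : ℂ → ℂ) (hf : Differentiable ℂ f) (hg : Differentiable ℂ g)
    (Ψ₁ Ψ₂ Ψ₃ : ℂ → ℂ)
    (hΨ₁ : ∀ z : ℂ, HasDerivAt Ψ₁ ((1 / 2 : ℂ) * f z * (1 - (g z) ^ 2)) z)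
    (hΨ₂ : ∀ z : ℂ, HasDerivAt Ψ₂ ((Complex.I / 2) * f z * (1 + (g z) ^ 2)) z)
    (hΨ₃ : ∀ z : ℂ, HasDerivAt Ψ₃ (f z * g z) z)
    -- the conjugate minimal surfaces `x = Re Ψ` and `y = Im Ψ`
    (x y : ℝ → ℝ → ℝ × ℝ × ℝ)
    (hx : ∀ u v : ℝ, x u v =
      ((Ψ₁ (u + v * Complex.I)).re, (Ψ₂ (u + v * Complex.I)).re,
        (Ψ₃ (u + v * Complex.I)).re))
    (hy : ∀ u v : ℝ, y u v =
      ((Ψ₁ (u + v * Complex.I)).im, (Ψ₂ (u + v * Complex.I)).im,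
        (Ψ₃ (u + v * Complex.I)).im)) :
    ∀ u v : ℝ,
      -- Cauchy–Riemann equations, componentwise
      (deriv (fun s => (x s v).1) u = deriv (fun s => (y u s).1) v ∧
       deriv (fun s => (x s v).2.1) u = deriv (fun s => (y u s).2.1) v ∧
       deriv (fun s => (x s v).2.2) u = deriv (fun s => (y u s).2.2) v) ∧
      (deriv (fun s => (x u s).1) v = -deriv (fun s => (y s v).1) u ∧
       deriv (fun s => (x u s).2.1) v = -deriv (fun s => (y s v).2.1) u ∧
       deriv (fun s => (x u s).2.2) v = -deriv (fun s => (y s v).2.2) u) ∧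
      -- equality of first fundamental forms along the associated family
      (∀ t : ℝ,
        let assoc : ℝ → ℝ → ℝ × ℝ × ℝ := fun u v =>
          ((x u v).1 * Real.cos t + (y u v).1 * Real.sin t,
           (x u v).2.1 * Real.cos t + (y u v).2.1 * Real.sin t,
           (x u v).2.2 * Real.cos t + (y u v).2.2 * Real.sin t)
        let ru : (ℝ → ℝ → ℝ × ℝ × ℝ) → ℝ × ℝ × ℝ := fun r =>
          (deriv (fun s => (r s v).1) u, deriv (fun s => (r s v).2.1) u,
            deriv (fun s => (r s v).2.2) u)
        let rv : (ℝ → ℝ → ℝ × ℝ × ℝ) → ℝ × ℝ × ℝ := fun r =>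
          (deriv (fun s => (r u s).1) v, deriv (fun s => (r u s).2.1) v,
            deriv (fun s => (r u s).2.2) v)
        let dot : ℝ × ℝ × ℝ → ℝ × ℝ × ℝ → ℝ := fun p q =>
          p.1 * q.1 + p.2.1 * q.2.1 + p.2.2 * q.2.2
        dot (ru assoc) (ru assoc) = dot (ru x) (ru x) ∧
        dot (ru assoc) (rv assoc) = dot (ru x) (rv x) ∧
        dot (rv assoc) (rv assoc) = dot (rv x) (rv x)) := by
  intro u v
  have m₁ := aux_master Ψ₁ _ u v (hΨ₁ (↑u + ↑v * I))
  have m₂ := aux_master Ψ₂ _ u v (hΨ₂ (↑u + ↑v * I))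
  have m₃ := aux_master Ψ₃ _ u v (hΨ₃ (↑u + ↑v * I))
  set z : ℂ := ↑u + ↑v * I with hz
  set d₁ : ℂ := (1 / 2 : ℂ) * f z * (1 - (g z) ^ 2) with hd₁
  set d₂ : ℂ := (Complex.I / 2) * f z * (1 + (g z) ^ 2) with hd₂
  set d₃ : ℂ := f z * g z with hd₃
  obtain ⟨a1u, b1u, a1v, b1v, c1u, c1v⟩ := m₁
  obtain ⟨a2u, b2u, a2v, b2v, c2u, c2v⟩ := m₂
  obtain ⟨a3u, b3u, a3v, b3v, c3u, c3v⟩ := m₃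
  have hsum : d₁ ^ 2 + d₂ ^ 2 + d₃ ^ 2 = 0 := by
    rw [hd₁, hd₂, hd₃]
    linear_combination ((f z) ^ 2 * (1 + (g z) ^ 2) ^ 2 / 4) * Complex.I_sq
  have hre0 : d₁.re * d₁.re - d₁.im * d₁.im + (d₂.re * d₂.re - d₂.im * d₂.im)
      + (d₃.re * d₃.re - d₃.im * d₃.im) = 0 := by
    have h := congrArg Complex.re hsum
    simpa [pow_two, Complex.mul_re] using h
  have him0 : d₁.re * d₁.im + d₂.re * d₂.im + d₃.re * d₃.im = 0 := by
    have h := congrArg Complex.im hsum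
    simp [pow_two, Complex.mul_im] at h
    linarith
  simp only [hx, hy]
  refine ⟨⟨a1u.trans b1v.symm, a2u.trans b2v.symm, a3u.trans b3v.symm⟩,
    ⟨by rw [a1v, b1u], by rw [a2v, b2u], by rw [a3v, b3u]⟩, ?_⟩
  intro t
  rw [a1u, a2u, a3u, a1v, a2v, a3v,
    c1u (Real.cos t) (Real.sin t), c2u (Real.cos t) (Real.sin t),
    c3u (Real.cos t) (Real.sin t), c1v (Real.cos t) (Real.sin t),
    c2v (Real.cos t) (Real.sin t), c3v (Real.cos t) (Real.sin t)]
  have hpy : Real.cos t ^ 2 + Real.sin t ^ 2 = 1 := by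
    rw [add_comm]; exact Real.sin_sq_add_cos_sq t
  refine ⟨?_, ?_, ?_⟩
  · linear_combination (-(Real.sin t) ^ 2) * hre0
      + (2 * Real.cos t * Real.sin t) * him0
      + (d₁.re * d₁.re + d₂.re * d₂.re + d₃.re * d₃.re) * hpy
  · linear_combination (Real.cos t * Real.sin t) * hre0
      + ((Real.sin t) ^ 2 - (Real.cos t) ^ 2 + 1) * him0
  · linear_combination ((Real.sin t) ^ 2) * hre0
      + (-2 * Real.cos t * Real.sin t) * him0
      + (d₁.im * d₁.im + d₂.im * d₂.im + d₃.im * d₃.im) * hpy
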